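/- Let (X,u) and (Y,v) be closure spaces and σ a Čech closure operator on Y^X. Then σ is proper if and only if for every topological space Z which is either a T₁-space having at most one non-isolated point or the Sierpiński space (regarded as a closure space via its Kuratowski closure), continuity of g : Z × (X,u) → (Y,v) implies continuity of g* : Z → (Y^X,σ); and σ is admissible if and only if for every such space Z, continuity of g* : Z → (Y^X,σ) implies continuity of g : Z × (X,u) → (Y,v). -/
import Mathlib


open Set

universe u

/-- A Čech closure operator on a type `X`: it satisfies (C1) `cl ∅ = ∅`,
(C2) `A ⊆ cl A` and (C3) `cl (A ∪ B) = cl A ∪ cl B`.  The pair `(X, u)` is a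
(Čech) closure space. -/
structure CechClosure (X : Type u) : Type u where
  cl : Set X → Set X
  cl_empty : cl ∅ = ∅
  subset_cl : ∀ A : Set X, A ⊆ cl A
  cl_union : ∀ A B : Set X, cl (A ∪ B) = cl A ∪ cl B

namespace CechClosure

variable {X Y Z : Type u}

/-- The interior operator of a closure space: `int_u A = X \ u (X \ A)`. -/
def interior (u : CechClosure X) (A : Set X) : Set X := (u.cl Aᶜ)ᶜ

/-- `U` is a neighbourhood of `x` in `(X, u)` if `x ∈ int_u U`. -/
def Nhd (u : CechClosure X) (x : X) (U : Set X) : Prop := x ∈ u.interior U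

theorem interior_subset (u : CechClosure X) (A : Set X) : u.interior A ⊆ A := by
  intro x hx
  by_contra h
  exact hx (u.subset_cl _ h)

theorem interior_inter (u : CechClosure X) (A B : Set X) :
    u.interior (A ∩ B) = u.interior A ∩ u.interior B := by
  unfold interior
  rw [compl_inter, u.cl_union, compl_union]

theorem nhd_univ (u : CechClosure X) (x : X) : u.Nhd x univ := by
  simp [Nhd, interior, u.cl_empty]

theorem nhd_inter (u : CechClosure X) {x : X} {A B : Set X} (hA : u.Nhd x A)
    (hB : u.Nhd x B) : u.Nhd x (A ∩ B) := by
  have h := u.interior_inter A B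
  unfold Nhd at *
  rw [h]
  exact ⟨hA, hB⟩

/-- A function `f : (X, u) → (Y, v)` between closure spaces is continuous if
`f (u A) ⊆ v (f A)` for every `A ⊆ X`. -/
def Continuous (u : CechClosure X) (v : CechClosure Y) (f : X → Y) : Prop :=
  ∀ A : Set X, f '' u.cl A ⊆ v.cl (f '' A)

/-- The product of two closure spaces: `(z, x)` is in the closure of `S` iff every
"rectangle" `W ×ˢ U` of neighbourhoods `W` of `z` and `U` of `x` meets `S`. -/
def prod (w : CechClosure Z) (u : CechClosure X) : CechClosure (Z × X) where
  cl S := {p | ∀ W U, w.Nhd p.1 W → u.Nhd p.2 U → (W ×ˢ U ∩ S).Nonempty}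
  cl_empty := by
    ext p
    simp only [mem_setOf_eq, mem_empty_iff_false, iff_false]
    intro h
    rcases h univ univ (w.nhd_univ _) (u.nhd_univ _) with ⟨q, -, hq⟩
    exact hq
  subset_cl := by
    intro S p hp W U hW hU
    exact ⟨p, ⟨⟨w.interior_subset _ hW, u.interior_subset _ hU⟩, hp⟩⟩
  cl_union := by
    intro S T
    ext p
    simp only [mem_setOf_eq, mem_union]
    constructor
    · intro h
      by_contra hc
      push_neg at hc
      obtain ⟨h1, h2⟩ := hc
      simp only [← Set.not_nonempty_iff_eq_empty] at h1 h2
      obtain ⟨W1, U1, hW1, hU1, hne1⟩ := h1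
      obtain ⟨W2, U2, hW2, hU2, hne2⟩ := h2
      rcases h (W1 ∩ W2) (U1 ∩ U2) (w.nhd_inter hW1 hW2) (u.nhd_inter hU1 hU2) with
        ⟨q, ⟨⟨hq1, hq2⟩, hqST⟩⟩
      rcases hqST with hqS | hqT
      · exact hne1 ⟨q, ⟨⟨hq1.1, hq2.1⟩, hqS⟩⟩
      · exact hne2 ⟨q, ⟨⟨hq1.2, hq2.2⟩, hqT⟩⟩
    · rintro (h | h) W U hW hU
      · rcases h W U hW hU with ⟨q, hq1, hq2⟩
        exact ⟨q, hq1, Or.inl hq2⟩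
      · rcases h W U hW hU with ⟨q, hq1, hq2⟩
        exact ⟨q, hq1, Or.inr hq2⟩

/-- `Y^X`: the type of continuous functions between the closure spaces
`(X, u)` and `(Y, v)`. -/
def ContMap (u : CechClosure X) (v : CechClosure Y) : Type u :=
  {f : X → Y // Continuous u v f}

/-- A closure operator `σ` on `Y^X` is proper (splitting) if for every closure space
`(Z, w)`, continuity of `g : (Z, w) × (X, u) → (Y, v)` implies continuity of
`g* : (Z, w) → (Y^X, σ)`, where `g (z, x) = (g* z) x`. -/
def Proper (u : CechClosure X) (v : CechClosure Y) (σ : CechClosure (ContMap u v)) : Prop :=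
  ∀ (Z : Type u) (w : CechClosure Z) (G : Z → ContMap u v),
    Continuous (w.prod u) v (fun p => (G p.1).1 p.2) → Continuous w σ G

/-- A closure operator `σ` on `Y^X` is admissible (jointly continuous) if for every closure
space `(Z, w)`, continuity of `g* : (Z, w) → (Y^X, σ)` implies continuity of
`g : (Z, w) × (X, u) → (Y, v)`, where `g (z, x) = (g* z) x`. -/
def Admissible (u : CechClosure X) (v : CechClosure Y) (σ : CechClosure (ContMap u v)) : Prop :=
  ∀ (Z : Type u) (w : CechClosure Z) (G : Z → ContMap u v),
    Continuous w σ G → Continuous (w.prod u) v (fun p => (G p.1).1 p.2)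

/-- A topological space regarded as a closure space via its (Kuratowski) closure operator. -/
def ofTop {Z : Type u} (t : TopologicalSpace Z) : CechClosure Z :=
  letI := t
  { cl := fun A => _root_.closure A
    cl_empty := closure_empty
    subset_cl := fun _ => subset_closure
    cl_union := fun _ _ => closure_union }

/-- `le` is the order relation of a directed set: a reflexive and transitive relation on a
nonempty type in which every two elements have an upper bound. -/
structure IsDirectedOrder {Λ : Type*} (le : Λ → Λ → Prop) : Prop where
  refl : ∀ a, le a a
  trans : ∀ a b c, le a b → le b c → le a c
  directed : ∀ a b, ∃ c, le a c ∧ le b c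
  nonempty : Nonempty Λ

/-- Convergence of a net `s : Λ → X` (with order `le` on `Λ`) to a point `x` in a closure
space `(X, u)`: every neighbourhood of `x` contains `s l` residually. -/
def NetConv (u : CechClosure X) {Λ : Type*} (le : Λ → Λ → Prop) (s : Λ → X) (x : X) : Prop :=
  ∀ U : Set X, u.Nhd x U → ∃ l₀, ∀ l, le l₀ l → s l ∈ U

/-- The product order on `Λ × M`. -/
def prodLE {Λ M : Type*} (leΛ : Λ → Λ → Prop) (leM : M → M → Prop) :
    Λ × M → Λ × M → Prop :=
  fun p q => leΛ p.1 q.1 ∧ leM p.2 q.2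

/-- A net `F : Λ → Y^X` converges continuously to `f ∈ Y^X` if for every `x ∈ X` and every
net `s : M → X` converging to `x` in `(X, u)`, the net `(l, m) ↦ (F l) (s m)` (indexed by
`Λ × M` with the product order) converges to `f x` in `(Y, v)`. -/
def ContConv (u : CechClosure X) (v : CechClosure Y) {Λ : Type u} (leΛ : Λ → Λ → Prop)
    (F : Λ → ContMap u v) (f : ContMap u v) : Prop :=
  ∀ (M : Type u) (leM : M → M → Prop), IsDirectedOrder leM →
    ∀ (s : M → X) (x : X), NetConv u leM s x →
      NetConv v (prodLE leΛ leM) (fun p : Λ × M => (F p.1).1 (s p.2)) (f.1 x)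

/-- The upper limit of a net `A : Λ → Set X` of subsets of a closure space `(X, u)`: the set
of points `x` such that for every `l₀` and every neighbourhood `U` of `x` there is `l ≥ l₀`
with `A l ∩ U ≠ ∅`. -/
def UpperLim (u : CechClosure X) {Λ : Type*} (le : Λ → Λ → Prop) (A : Λ → Set X) : Set X :=
  {x | ∀ (l₀ : Λ) (U : Set X), u.Nhd x U → ∃ l, le l₀ l ∧ (A l ∩ U).Nonempty}

/-- `g : M → α` is a subnet of `f : Λ → α`: there is `φ : M → Λ` with `g = f ∘ φ` such that
`φ` is residually above any given index of `Λ`. -/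
def IsSubnet {α : Type*} {Λ M : Type*} (leΛ : Λ → Λ → Prop) (leM : M → M → Prop)
    (f : Λ → α) (g : M → α) : Prop :=
  ∃ φ : M → Λ, (∀ m, g m = f (φ m)) ∧ ∀ l₀, ∃ m₀, ∀ m, leM m₀ m → leΛ l₀ (φ m)

end CechClosure
namespace CechClosure

variable {X Y : Type u}

/-- A topological space has at most one non-isolated point. -/
def AtMostOneNonIsolated (Z : Type*) [TopologicalSpace Z] : Prop :=
  ∀ z₁ z₂ : Z, ¬IsOpen ({z₁} : Set Z) → ¬IsOpen ({z₂} : Set Z) → z₁ = z₂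

/-- A topological space is (homeomorphic to) the Sierpiński space: it has exactly two
points `a ≠ b` and its open sets are `∅`, `{b}` and the whole space. -/
def IsSierpinski (Z : Type*) [TopologicalSpace Z] : Prop :=
  ∃ a b : Z, a ≠ b ∧ (∀ z : Z, z = a ∨ z = b) ∧
    ∀ S : Set Z, IsOpen S ↔ S = ∅ ∨ S = {b} ∨ S = Set.univ

/-! ### Auxiliary lemmas -/

theorem cl_mono {Z : Type u} (w : CechClosure Z) {A B : Set Z} (h : A ⊆ B) :
    w.cl A ⊆ w.cl B := by
  have hB : A ∪ B = B := union_eq_self_of_subset_left h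
  calc w.cl A ⊆ w.cl A ∪ w.cl B := subset_union_left
    _ = w.cl (A ∪ B) := (w.cl_union A B).symm
    _ = w.cl B := by rw [hB]

theorem nhd_iff {Z : Type u} (w : CechClosure Z) (z : Z) (A : Set Z) :
    w.Nhd z A ↔ z ∉ w.cl Aᶜ := Iff.rfl

theorem nhd_mono {Z : Type u} (w : CechClosure Z) {z : Z} {A B : Set Z} (h : w.Nhd z A)
    (hAB : A ⊆ B) : w.Nhd z B := by
  rw [nhd_iff] at h ⊢
  exact fun hz => h (cl_mono w (compl_subset_compl.2 hAB) hz)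

theorem mem_cl_iff {Z : Type u} (w : CechClosure Z) {z : Z} {A : Set Z} :
    z ∈ w.cl A ↔ ∀ U, w.Nhd z U → (U ∩ A).Nonempty := by
  constructor
  · intro hz U hU
    rcases (U ∩ A).eq_empty_or_nonempty with h | h
    · exfalso
      have hUA : U ⊆ Aᶜ := fun y hy hyA => (eq_empty_iff_forall_notMem.1 h) y ⟨hy, hyA⟩
      have h2 : w.Nhd z Aᶜ := nhd_mono w hU hUA
      rw [nhd_iff, compl_compl] at h2
      exact h2 hz
    · exact h
  · intro h
    by_contra hz
    have h2 : w.Nhd z Aᶜ := by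
      rw [nhd_iff, compl_compl]
      exact hz
    rcases h Aᶜ h2 with ⟨y, hy1, hy2⟩
    exact hy1 hy2

theorem continuous_iff_nhd {Z W' : Type u} (w : CechClosure Z) (v' : CechClosure W')
    (f : Z → W') :
    Continuous w v' f ↔ ∀ z V, v'.Nhd (f z) V → w.Nhd z (f ⁻¹' V) := by
  constructor
  · intro hf z V hV
    by_contra h
    have hz : z ∈ w.cl (f ⁻¹' V)ᶜ := by
      rw [nhd_iff, not_not] at h
      exact h
    have h1 : f z ∈ v'.cl (f '' (f ⁻¹' V)ᶜ) := hf _ ⟨z, hz, rfl⟩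
    have h2 : f '' (f ⁻¹' V)ᶜ ⊆ Vᶜ := by
      rintro _ ⟨y, hy, rfl⟩
      exact hy
    have h3 : f z ∈ v'.cl Vᶜ := cl_mono v' h2 h1
    rw [nhd_iff] at hV
    exact hV h3
  · intro h A
    rintro _ ⟨z, hz, rfl⟩
    rw [mem_cl_iff]
    intro V hV
    rcases (mem_cl_iff w).1 hz (f ⁻¹' V) (h z V hV) with ⟨y, hy1, hy2⟩
    exact ⟨f y, hy1, ⟨y, hy2, rfl⟩⟩

theorem nhd_prod_iff {Z : Type u} {w : CechClosure Z} {u' : CechClosure X} {p : Z × X}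
    {S : Set (Z × X)} :
    (w.prod u').Nhd p S ↔ ∃ V U, w.Nhd p.1 V ∧ u'.Nhd p.2 U ∧ V ×ˢ U ⊆ S := by
  rw [nhd_iff]
  have hcl : (w.prod u').cl Sᶜ =
      {q : Z × X | ∀ V U, w.Nhd q.1 V → u'.Nhd q.2 U → ((V ×ˢ U) ∩ Sᶜ).Nonempty} := rfl
  rw [hcl]
  constructor
  · intro h
    have h' : ¬ ∀ V U, w.Nhd p.1 V → u'.Nhd p.2 U → ((V ×ˢ U) ∩ Sᶜ).Nonempty := h
    push_neg at h'
    obtain ⟨V, U, hV, hU, hne⟩ := h'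
    refine ⟨V, U, hV, hU, fun q hq => ?_⟩
    by_contra hq'
    exact (eq_empty_iff_forall_notMem.1 hne) q ⟨hq, hq'⟩
  · rintro ⟨V, U, hV, hU, hsub⟩ h
    have h2 : ∀ V' U', w.Nhd p.1 V' → u'.Nhd p.2 U' → ((V' ×ˢ U') ∩ Sᶜ).Nonempty := h
    rcases h2 V U hV hU with ⟨q, hq1, hq2⟩
    exact hq2 (hsub hq1)

theorem cl_ofTop {Z : Type u} (t : TopologicalSpace Z) (A : Set Z) :
    (ofTop t).cl A = @closure Z t A := rfl

theorem nhd_ofTop {Z : Type u} (t : TopologicalSpace Z) {z : Z} {N : Set Z} :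
    (ofTop t).Nhd z N ↔ N ∈ @nhds Z t z := by
  letI := t
  rw [nhd_iff, cl_ofTop, ← mem_interior_iff_mem_nhds]
  rw [closure_compl]
  simp

/-- The neighbourhood filter of a point in a closure space. -/
def nhdFilter {Z : Type u} (w : CechClosure Z) (z : Z) : Filter Z where
  sets := {V | w.Nhd z V}
  univ_sets := w.nhd_univ z
  sets_of_superset := fun hA hAB => nhd_mono _ hA hAB
  inter_sets := fun hA hB => w.nhd_inter hA hB

theorem mem_nhdFilter {Z : Type u} (w : CechClosure Z) (z : Z) (V : Set Z) :
    V ∈ nhdFilter w z ↔ w.Nhd z V := Iff.rfl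

/-- Extension of a map `ι → Z` to `Option ι` sending `none` to `z`. -/
def optMap {Z ι : Type u} (z : Z) (f : ι → Z) : Option ι → Z
  | none => z
  | some j => f j

/-- The test topology on `Option ι`: all points of `ι` are isolated, while the
neighbourhood filter of `none` is generated by the pullbacks of the `w`-neighbourhoods of
`z` together with the cofinite filter. -/
def testTop {Z ι : Type u} (w : CechClosure Z) (z : Z) (f : ι → Z) :
    TopologicalSpace (Option ι) :=
  nhdsAdjoint none (Filter.comap (optMap z f) (nhdFilter w z) ⊓ Filter.cofinite)

theorem testTop_nhds_none {Z ι : Type u} (w : CechClosure Z) (z : Z) (f : ι → Z) :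
    @nhds (Option ι) (testTop w z f) none =
      pure none ⊔ (Filter.comap (optMap z f) (nhdFilter w z) ⊓ Filter.cofinite) :=
  nhds_nhdsAdjoint_same _ _

theorem testTop_nhds_some {Z ι : Type u} (w : CechClosure Z) (z : Z) (f : ι → Z) (j : ι) :
    @nhds (Option ι) (testTop w z f) (some j) = pure (some j) :=
  nhds_nhdsAdjoint_of_ne _ (Option.some_ne_none j)

theorem testTop_nhd_some {Z ι : Type u} (w : CechClosure Z) (z : Z) (f : ι → Z) (j : ι)
    {N : Set (Option ι)} (hj : some j ∈ N) :
    (ofTop (testTop w z f)).Nhd (some j) N := by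
  rw [nhd_ofTop, testTop_nhds_some]
  exact Filter.mem_pure.2 hj

theorem testTop_nhd_none_preimage {Z ι : Type u} (w : CechClosure Z) (z : Z) (f : ι → Z)
    {V : Set Z} (hV : w.Nhd z V) :
    (ofTop (testTop w z f)).Nhd none (optMap z f ⁻¹' V) := by
  rw [nhd_ofTop, testTop_nhds_none, Filter.mem_sup]
  constructor
  · exact Filter.mem_pure.2 (w.interior_subset V hV)
  · exact Filter.mem_inf_of_left (Filter.preimage_mem_comap ((mem_nhdFilter w z V).2 hV))

theorem testTop_nhd_none_elim {Z ι : Type u} (w : CechClosure Z) (z : Z) (f : ι → Z)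
    {N : Set (Option ι)} (hN : (ofTop (testTop w z f)).Nhd none N) :
    ∃ V, w.Nhd z V ∧ ∃ C : Set (Option ι), Cᶜ.Finite ∧ optMap z f ⁻¹' V ∩ C ⊆ N := by
  rw [nhd_ofTop, testTop_nhds_none, Filter.mem_sup] at hN
  obtain ⟨-, hN2⟩ := hN
  rw [Filter.mem_inf_iff] at hN2
  obtain ⟨t1, ht1, t2, ht2, rfl⟩ := hN2
  rw [Filter.mem_comap] at ht1
  obtain ⟨V, hV, hsub⟩ := ht1
  exact ⟨V, (mem_nhdFilter w z V).1 hV, t2, Filter.mem_cofinite.1 ht2,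
    fun e he => ⟨hsub he.1, he.2⟩⟩

theorem testTop_t1 {Z ι : Type u} (w : CechClosure Z) (z : Z) (f : ι → Z) :
    @T1Space (Option ι) (testTop w z f) := by
  letI := testTop w z f
  refine ⟨fun p => ?_⟩
  rw [← isOpen_compl_iff, isOpen_iff_mem_nhds]
  intro q hq
  rcases Option.eq_none_or_eq_some q with rfl | ⟨j, rfl⟩
  · rw [testTop_nhds_none, Filter.mem_sup]
    exact ⟨Filter.mem_pure.2 hq,
      Filter.mem_inf_of_right (Filter.mem_cofinite.2 (by simp))⟩
  · rw [testTop_nhds_some]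
    exact Filter.mem_pure.2 hq

theorem testTop_amo {Z ι : Type u} (w : CechClosure Z) (z : Z) (f : ι → Z) :
    @AtMostOneNonIsolated (Option ι) (testTop w z f) := by
  letI := testTop w z f
  have key : ∀ q : Option ι, ¬IsOpen ({q} : Set (Option ι)) → q = none := by
    intro q hqo
    rcases Option.eq_none_or_eq_some q with rfl | ⟨j, rfl⟩
    · rfl
    · exfalso
      apply hqo
      rw [isOpen_iff_mem_nhds]
      intro a ha
      rw [Set.mem_singleton_iff] at ha
      subst ha
      rw [testTop_nhds_some]
      exact Filter.mem_pure.2 rfl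
  intro q₁ q₂ h1 h2
  rw [key q₁ h1, key q₂ h2]

/-- The hard direction for properness: the test spaces suffice. -/
theorem proper_of_test (u : CechClosure X) (v : CechClosure Y)
    (σ : CechClosure (ContMap u v))
    (hT : ∀ (Z : Type u) [tZ : TopologicalSpace Z],
        ((T1Space Z ∧ AtMostOneNonIsolated Z) ∨ IsSierpinski Z) →
        ∀ G : Z → ContMap u v,
          Continuous ((ofTop tZ).prod u) v (fun p => (G p.1).1 p.2) →
          Continuous (ofTop tZ) σ G) :
    Proper u v σ := by
  intro Z w G hg A
  rintro gy ⟨z, hz, rfl⟩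
  classical
  let ι : Type u := {a : Z // a ∈ A} × ULift.{u} ℕ
  let f : ι → Z := fun j => j.1.1
  have hg' : Continuous ((ofTop (testTop w z f)).prod u) v
      (fun p : Option ι × X => ((fun q => G (optMap z f q)) p.1).1 p.2) := by
    rw [continuous_iff_nhd]
    rintro ⟨q, x'⟩ W hW
    have h0 := (continuous_iff_nhd (w.prod u) v (fun r : Z × X => (G r.1).1 r.2)).1 hg
      (optMap z f q, x') W hW
    rcases nhd_prod_iff.1 h0 with ⟨V, U, hV, hU, hsub⟩
    cases q with
    | none =>
      rw [nhd_prod_iff]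
      exact ⟨optMap z f ⁻¹' V, U, testTop_nhd_none_preimage w z f hV, hU,
        fun r hr => hsub (Set.mk_mem_prod hr.1 hr.2)⟩
    | some j =>
      rw [nhd_prod_iff]
      refine ⟨{some j}, U, testTop_nhd_some w z f j (Set.mem_singleton _), hU, ?_⟩
      intro r hr
      have h1 : r.1 = some j := hr.1
      have h2 : optMap z f r.1 ∈ V := by
        rw [h1]
        exact w.interior_subset V hV
      exact hsub (Set.mk_mem_prod h2 hr.2)
  have hH := @hT (Option ι) (testTop w z f)
    (Or.inl ⟨testTop_t1 w z f, testTop_amo w z f⟩) (fun q => G (optMap z f q)) hg'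
  have hmem : none ∈ (ofTop (testTop w z f)).cl (Set.range (Option.some : ι → Option ι)) := by
    rw [mem_cl_iff]
    intro N hN
    obtain ⟨V, hV, C, hC, hsubN⟩ := testTop_nhd_none_elim w z f hN
    obtain ⟨a, haV, haA⟩ := (mem_cl_iff w).1 hz V hV
    have hinj : Function.Injective (fun n : ℕ => (some (⟨a, haA⟩, ULift.up n) : Option ι)) := by
      intro m n h
      exact congrArg (fun e => e.2.down) (Option.some.inj h)
    have hfin : ((fun n : ℕ => (some (⟨a, haA⟩, ULift.up n) : Option ι)) ⁻¹' Cᶜ).Finite :=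
      Set.Finite.preimage (Set.injOn_of_injective hinj) hC
    obtain ⟨n, hn⟩ := hfin.infinite_compl.nonempty
    refine ⟨some (⟨a, haA⟩, ULift.up n), hsubN ⟨haV, ?_⟩, ⟨_, rfl⟩⟩
    simpa using hn
  have hfinal := hH (Set.range (Option.some : ι → Option ι)) ⟨none, hmem, rfl⟩
  have himg : (fun q => G (optMap z f q)) '' Set.range (Option.some : ι → Option ι)
      = G '' A := by
    ext y
    constructor
    · rintro ⟨_, ⟨j, rfl⟩, rfl⟩
      exact ⟨j.1.1, j.1.2, rfl⟩
    · rintro ⟨a, ha, rfl⟩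
      exact ⟨some (⟨a, ha⟩, ULift.up 0), ⟨_, rfl⟩, rfl⟩
  rw [himg] at hfinal
  exact hfinal

/-- The hard direction for admissibility: the test spaces suffice. -/
theorem admissible_of_test (u : CechClosure X) (v : CechClosure Y)
    (σ : CechClosure (ContMap u v))
    (hT : ∀ (Z : Type u) [tZ : TopologicalSpace Z],
        ((T1Space Z ∧ AtMostOneNonIsolated Z) ∨ IsSierpinski Z) →
        ∀ G : Z → ContMap u v,
          Continuous (ofTop tZ) σ G →
          Continuous ((ofTop tZ).prod u) v (fun p => (G p.1).1 p.2)) :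
    Admissible u v σ := by
  intro Z w G hG
  rw [continuous_iff_nhd]
  intro p W hW
  by_contra hcon
  rw [nhd_prod_iff] at hcon
  push_neg at hcon
  classical
  let κ : Type u := {q : Set Z × Set X // w.Nhd p.1 q.1 ∧ u.Nhd p.2 q.2}
  have hbadex : ∀ q : κ, ∃ r : Z × X, r ∈ q.1.1 ×ˢ q.1.2 ∧ (G r.1).1 r.2 ∉ W := by
    intro q
    obtain ⟨r, hr1, hr2⟩ := Set.not_subset.1 (hcon q.1.1 q.1.2 q.2.1 q.2.2)
    exact ⟨r, hr1, hr2⟩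
  choose bad hbad1 hbad2 using hbadex
  let ι : Type u := κ × ULift.{u} ℕ
  let f : ι → Z := fun j => (bad j.1).1
  have hH : Continuous (ofTop (testTop w p.1 f)) σ (fun q => G (optMap p.1 f q)) := by
    intro B
    rintro gy ⟨q, hq, rfl⟩
    cases q with
    | some j =>
      obtain ⟨e, he1, he2⟩ := (mem_cl_iff _).1 hq {some j}
        (testTop_nhd_some w p.1 f j (Set.mem_singleton _))
      have he : e = some j := he1
      exact σ.subset_cl _ ⟨some j, he ▸ he2, rfl⟩
    | none =>
      have hzcl : p.1 ∈ w.cl (optMap p.1 f '' B) := by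
        rw [mem_cl_iff]
        intro V hV
        obtain ⟨e, he1, he2⟩ := (mem_cl_iff _).1 hq (optMap p.1 f ⁻¹' V)
          (testTop_nhd_none_preimage w p.1 f hV)
        exact ⟨optMap p.1 f e, he1, ⟨e, he2, rfl⟩⟩
      have hfin := hG (optMap p.1 f '' B) ⟨p.1, hzcl, rfl⟩
      rwa [Set.image_image] at hfin
  have happly := @hT (Option ι) (testTop w p.1 f)
    (Or.inl ⟨testTop_t1 w p.1 f, testTop_amo w p.1 f⟩) (fun q => G (optMap p.1 f q)) hH
  have h1 := (continuous_iff_nhd ((ofTop (testTop w p.1 f)).prod u) v _).1 happly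
    (none, p.2) W hW
  rw [nhd_prod_iff] at h1
  obtain ⟨N, U₀, hN, hU₀, hsub⟩ := h1
  obtain ⟨V, hV, C, hC, hsubN⟩ := testTop_nhd_none_elim w p.1 f hN
  let q₀ : κ := ⟨(V, U₀), hV, hU₀⟩
  have hinj : Function.Injective (fun n : ℕ => (some (q₀, ULift.up n) : Option ι)) := by
    intro m n h
    exact congrArg (fun e => e.2.down) (Option.some.inj h)
  have hfin : ((fun n : ℕ => (some (q₀, ULift.up n) : Option ι)) ⁻¹' Cᶜ).Finite :=
    Set.Finite.preimage (Set.injOn_of_injective hinj) hC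
  obtain ⟨n, hn⟩ := hfin.infinite_compl.nonempty
  have heN : (some (q₀, ULift.up n) : Option ι) ∈ N := by
    apply hsubN
    exact ⟨(hbad1 q₀).1, by simpa using hn⟩
  have hr := hsub (Set.mk_mem_prod heN (hbad1 q₀).2)
  exact hbad2 q₀ hr

/-- A closure operator `σ` on `Y^X` is proper iff for every topological space `Z` which is
either a `T₁`-space with at most one non-isolated point or the Sierpiński space (regarded
as a closure space via its Kuratowski closure), continuity of `g : Z × (X, u) → (Y, v)`
implies continuity of `g* : Z → (Y^X, σ)`; and it is admissible iff for every such `Z`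
the reverse implication holds. -/
theorem proper_admissible_iff_test_spaces (u : CechClosure X) (v : CechClosure Y)
    (σ : CechClosure (ContMap u v)) :
    (Proper u v σ ↔
      ∀ (Z : Type u) [tZ : TopologicalSpace Z],
        ((T1Space Z ∧ AtMostOneNonIsolated Z) ∨ IsSierpinski Z) →
        ∀ G : Z → ContMap u v,
          Continuous ((ofTop tZ).prod u) v (fun p => (G p.1).1 p.2) →
          Continuous (ofTop tZ) σ G) ∧
    (Admissible u v σ ↔
      ∀ (Z : Type u) [tZ : TopologicalSpace Z],
        ((T1Space Z ∧ AtMostOneNonIsolated Z) ∨ IsSierpinski Z) →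
        ∀ G : Z → ContMap u v,
          Continuous (ofTop tZ) σ G →
          Continuous ((ofTop tZ).prod u) v (fun p => (G p.1).1 p.2)) := by
  constructor
  · constructor
    · intro hP Z tZ _ G hg
      exact hP Z (ofTop tZ) G hg
    · intro hT
      exact proper_of_test u v σ hT
  · constructor
    · intro hA Z tZ _ G hG
      exact hA Z (ofTop tZ) G hG
    · intro hT
      exact admissible_of_test u v σ hT

end CechClosure
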